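/- Let |ξ| < π/2, 0 ≤ ρ < 1 and 0 ≤ γ < 1. If f(z) = z + Σ_{n=2}^∞ a_n z^n belongs to 𝒜 and its coefficients satisfy Σ_{n=2}^∞ [ (1-ρ)(n-1) sec ξ + (1-γ)(1 + nρ - ρ) ] |a_n| ≤ 1 - γ, then f belongs to the class 𝒮(ξ, γ, ρ). -/

import Mathlib

noncomputable section

open Complex Real Set

/-- The open unit disk in the complex plane. -/
def unitDisk : Set ℂ := Metric.ball 0 1

/-- The class 𝒜 of normalized analytic functions on the unit disk:
`f` analytic on `𝔻`, `f 0 = 0`, `f' 0 = 1`. -/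
def NormalizedAnalytic (f : ℂ → ℂ) : Prop :=
  AnalyticOn ℂ f unitDisk ∧ f 0 = 0 ∧ deriv f 0 = 1

/-- The spirallike class `𝒮(ξ, γ, ρ)`. -/
def SpiralS (ξ γ ρ : ℝ) (f : ℂ → ℂ) : Prop :=
  NormalizedAnalytic f ∧ Set.InjOn f unitDisk ∧
    ∀ z ∈ unitDisk, z ≠ 0 →
      (1 - (ρ : ℂ)) * f z + (ρ : ℂ) * z * deriv f z ≠ 0 ∧
      γ * Real.cos ξ <
        (Complex.exp (Complex.I * ξ) * (z * deriv f z) /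
          ((1 - (ρ : ℂ)) * f z + (ρ : ℂ) * z * deriv f z)).re

/-- The convex spirallike class `𝒦(ξ, γ, ρ)`. -/
def SpiralK (ξ γ ρ : ℝ) (f : ℂ → ℂ) : Prop :=
  NormalizedAnalytic f ∧ Set.InjOn f unitDisk ∧
    ∀ z ∈ unitDisk,
      deriv f z + (ρ : ℂ) * z * deriv (deriv f) z ≠ 0 ∧
      γ * Real.cos ξ <
        (Complex.exp (Complex.I * ξ) * (z * deriv (deriv f) z + deriv f z) /
          (deriv f z + (ρ : ℂ) * z * deriv (deriv f) z)).re

/-- The spirallike class `𝒮(ξ, γ)`. -/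
def SpiralS0 (ξ γ : ℝ) (f : ℂ → ℂ) : Prop :=
  NormalizedAnalytic f ∧ Set.InjOn f unitDisk ∧
    ∀ z ∈ unitDisk, z ≠ 0 →
      f z ≠ 0 ∧
      γ * Real.cos ξ <
        (Complex.exp (Complex.I * ξ) * (z * deriv f z) / f z).re

/-- The convex spirallike class `𝒦(ξ, γ)`. -/
def SpiralK0 (ξ γ : ℝ) (f : ℂ → ℂ) : Prop :=
  NormalizedAnalytic f ∧ Set.InjOn f unitDisk ∧
    ∀ z ∈ unitDisk,
      deriv f z ≠ 0 ∧
      γ * Real.cos ξ <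
        (Complex.exp (Complex.I * ξ) *
          (1 + z * deriv (deriv f) z / deriv f z)).re

/-- The class `ℛ^τ(ϑ, δ)`. -/
def ClassR (τ : ℂ) (ϑ δ : ℝ) (f : ℂ → ℂ) : Prop :=
  NormalizedAnalytic f ∧ Set.InjOn f unitDisk ∧
    ∀ z ∈ unitDisk,
      norm
        (((1 - (ϑ : ℂ)) * (if z = 0 then 1 else f z / z) + (ϑ : ℂ) * deriv f z - 1) /
          (2 * τ * (1 - (δ : ℂ)) +
            (1 - (ϑ : ℂ)) * (if z = 0 then 1 else f z / z) + (ϑ : ℂ) * deriv f z - 1)) < 1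

/-- The Pascal distribution series
`Θ_q^m(z) = z + ∑_{n=2}^∞ C(n+m-2, m-1) q^(n-1) (1-q)^m z^n`. -/
def pascalTheta (m : ℕ) (q : ℝ) : ℂ → ℂ := fun z =>
  z + ∑' n : ℕ, ((n + m).choose (m - 1) : ℂ) * (q : ℂ) ^ (n + 1) * (1 - (q : ℂ)) ^ m * z ^ (n + 2)

/-- The integral operator `𝒢_q^m(z) = ∫_0^z Θ_q^m(t)/t dt
= z + ∑_{n=2}^∞ C(n+m-2, m-1) q^(n-1) (1-q)^m z^n / n`. -/
def pascalG (m : ℕ) (q : ℝ) : ℂ → ℂ := fun z =>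
  z + ∑' n : ℕ, ((n + m).choose (m - 1) : ℂ) * (q : ℂ) ^ (n + 1) * (1 - (q : ℂ)) ^ m *
    z ^ (n + 2) / ((n : ℂ) + 2)

set_option maxHeartbeats 1000000 in
/-- sufficient coefficient condition for membership in `𝒮(ξ, γ, ρ)`. -/
theorem stmt0 (ξ ρ γ : ℝ) (hξ : |ξ| < π / 2) (hρ0 : 0 ≤ ρ) (hρ1 : ρ < 1)
    (hγ0 : 0 ≤ γ) (hγ1 : γ < 1) (f : ℂ → ℂ) (a : ℕ → ℂ)
    (hf : AnalyticOn ℂ f unitDisk)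
    (hrep : ∀ z ∈ unitDisk, HasSum (fun n : ℕ => a (n + 2) * z ^ (n + 2)) (f z - z))
    (hsummable : Summable (fun n : ℕ =>
      ((1 - ρ) * ((n : ℝ) + 1) * (Real.cos ξ)⁻¹ +
        (1 - γ) * (1 + ((n : ℝ) + 2) * ρ - ρ)) * ‖a (n + 2)‖))
    (hle : ∑' n : ℕ,
      ((1 - ρ) * ((n : ℝ) + 1) * (Real.cos ξ)⁻¹ +
        (1 - γ) * (1 + ((n : ℝ) + 2) * ρ - ρ)) * ‖a (n + 2)‖ ≤ 1 - γ) :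
    SpiralS ξ γ ρ f := by
  have hξ' := abs_lt.1 hξ
  have hcos : 0 < Real.cos ξ := Real.cos_pos_of_mem_Ioo ⟨hξ'.1, hξ'.2⟩
  have hsec : 1 ≤ (Real.cos ξ)⁻¹ := (one_le_inv₀ hcos).2 (Real.cos_le_one ξ)
  set c : ℕ → ℝ := fun n => (1 - ρ) * ((n : ℝ) + 1) * (Real.cos ξ)⁻¹ +
      (1 - γ) * (1 + ((n : ℝ) + 2) * ρ - ρ) with hcdef
  set A : ℕ → ℝ := fun n => ‖a (n + 2)‖ with hAdef
  have hA0 : ∀ n, 0 ≤ A n := fun n => norm_nonneg _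
  have hcsum : Summable (fun n => c n * A n) := hsummable
  have hcle : ∑' n, c n * A n ≤ 1 - γ := hle
  have hγ' : (0:ℝ) < 1 - γ := by linarith
  have hkey : ∀ n : ℕ, (1 - γ) * ((n:ℝ) + 2) ≤ c n := by
    intro n
    have hn : (0:ℝ) ≤ (n:ℝ) := Nat.cast_nonneg n
    have h1 : (1 - γ) ≤ (Real.cos ξ)⁻¹ := by linarith
    simp only [hcdef]
    nlinarith [mul_nonneg (mul_nonneg (sub_nonneg.2 hρ1.le) (by linarith : (0:ℝ) ≤ (n:ℝ)+1))
      (sub_nonneg.2 h1)]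
  have hc0 : ∀ n, 0 ≤ c n := fun n => le_trans (by positivity) (hkey n)
  have hNsum : Summable (fun n : ℕ => ((n:ℝ) + 2) * A n) := by
    refine Summable.of_nonneg_of_le (fun n => by positivity) (fun n => ?_)
      (hcsum.mul_left (1-γ)⁻¹)
    have h2 : (1-γ) * (((n:ℝ)+2) * A n) ≤ c n * A n := by
      rw [← mul_assoc]; exact mul_le_mul_of_nonneg_right (hkey n) (hA0 n)
    calc ((n:ℝ)+2) * A n = (1-γ)⁻¹ * ((1-γ) * (((n:ℝ)+2) * A n)) := by field_simp
      _ ≤ (1-γ)⁻¹ * (c n * A n) := mul_le_mul_of_nonneg_left h2 (by positivity)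
  have hN1 : ∑' n : ℕ, ((n:ℝ)+2) * A n ≤ 1 := by
    have h : (1-γ) * ∑' n : ℕ, ((n:ℝ)+2) * A n ≤ (1-γ) * 1 := by
      rw [← tsum_mul_left, mul_one]
      refine le_trans (Summable.tsum_le_tsum (fun n => ?_) (hNsum.mul_left _) hcsum) hcle
      rw [← mul_assoc]; exact mul_le_mul_of_nonneg_right (hkey n) (hA0 n)
    exact le_of_mul_le_mul_left h hγ'
  have hOpen : IsOpen unitDisk := Metric.isOpen_ball
  have hconn : IsPreconnected unitDisk := (convex_ball (0:ℂ) 1).isPreconnected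
  have h0mem : (0:ℂ) ∈ unitDisk := by simp [unitDisk]
  have habs : ∀ z ∈ unitDisk, ‖z‖ < 1 := fun z hz => by simpa [unitDisk] using hz
  have hderiv_term : ∀ (n : ℕ) (y : ℂ),
      HasDerivAt (fun w => a (n+2) * w^(n+2)) (((n:ℂ)+2) * a (n+2) * y^(n+1)) y := by
    intro n y
    have h := (hasDerivAt_pow (n+2) y).const_mul (a (n+2))
    refine h.congr_deriv ?_
    push_cast
    ring
  have hbound : ∀ (n : ℕ), ∀ y ∈ unitDisk,
      ‖((n:ℂ)+2) * a (n+2) * y^(n+1)‖ ≤ ((n:ℝ)+2) * A n := by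
    intro n y hy
    have e1 : ((n:ℂ)+2) = (((n:ℝ)+2 : ℝ) : ℂ) := by push_cast; ring
    rw [norm_mul, norm_mul, norm_pow, e1, Complex.norm_real, Real.norm_eq_abs,
      _root_.abs_of_nonneg (by positivity : (0:ℝ) ≤ (n:ℝ)+2)]
    have h2 : ‖y‖^(n+1) ≤ 1 :=
      pow_le_one₀ (norm_nonneg y) (habs y hy).le
    have h3 : ‖a (n+2)‖ = A n := rfl
    rw [h3]
    calc ((n:ℝ)+2) * A n * ‖y‖^(n+1) ≤ ((n:ℝ)+2) * A n * 1 := by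
          exact mul_le_mul_of_nonneg_left h2 (by positivity)
      _ = ((n:ℝ)+2) * A n := mul_one _
  have hsum0 : Summable (fun n : ℕ => a (n+2) * (0:ℂ)^(n+2)) := by
    have he : (fun n : ℕ => a (n+2) * (0:ℂ)^(n+2)) = fun _ => 0 := by funext n; simp
    rw [he]; exact summable_zero
  set F : ℂ → ℂ := fun w => ∑' n : ℕ, a (n+2) * w^(n+2) with hFdef
  set D : ℂ → ℂ := fun w => ∑' n : ℕ, ((n:ℂ)+2) * a (n+2) * w^(n+1) with hDdef
  have hFD : ∀ y ∈ unitDisk, HasDerivAt F (D y) y := fun y hy =>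
    hasDerivAt_tsum_of_isPreconnected hNsum hOpen hconn (fun n x _ => hderiv_term n x)
      hbound h0mem hsum0 hy
  have hfeq : ∀ y ∈ unitDisk, f y = y + F y := by
    intro y hy
    have h := (hrep y hy).tsum_eq
    simp only [hFdef]
    rw [h]; ring
  have hdf : ∀ y ∈ unitDisk, deriv f y = 1 + D y := by
    intro y hy
    have h1 : HasDerivAt (fun w => w + F w) (1 + D y) y := (hasDerivAt_id y).add (hFD y hy)
    have h2 : f =ᶠ[nhds y] fun w => w + F w := by
      filter_upwards [hOpen.mem_nhds hy] with w hw using hfeq w hw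
    rw [h2.deriv_eq, h1.deriv]
  have hF0 : F 0 = 0 := by
    simp only [hFdef]
    have he : (fun n : ℕ => a (n+2) * (0:ℂ)^(n+2)) = fun _ => (0:ℂ) := by funext n; simp
    rw [he, tsum_zero]
  have hD0 : D 0 = 0 := by
    simp only [hDdef]
    have he : (fun n : ℕ => ((n:ℂ)+2) * a (n+2) * (0:ℂ)^(n+1)) = fun _ => (0:ℂ) := by
      funext n; simp
    rw [he, tsum_zero]
  have hf0 : f 0 = 0 := by rw [hfeq 0 h0mem, hF0]; ring
  have hdf0 : deriv f 0 = 1 := by rw [hdf 0 h0mem, hD0]; ring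
  -- power difference bound
  have hpowdiff : ∀ (n : ℕ) (z1 z2 : ℂ) (s : ℝ), ‖z1‖ ≤ s → ‖z2‖ ≤ s →
      ‖z1^(n+2) - z2^(n+2)‖ ≤ ((n:ℝ)+2) * s^(n+1) * ‖z1 - z2‖ := by
    intro n z1 z2 s h1 h2
    have hs0 : 0 ≤ s := le_trans (norm_nonneg _) h1
    have hgeo := geom_sum₂_mul z1 z2 (n+2)
    rw [← hgeo, norm_mul]
    have hb : ‖∑ i ∈ Finset.range (n+2), z1^i * z2^(n+2-1-i)‖ ≤ ((n:ℝ)+2) * s^(n+1) := by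
      refine le_trans (norm_sum_le _ _) ?_
      have hterm : ∀ i ∈ Finset.range (n+2), ‖z1^i * z2^(n+2-1-i)‖ ≤ s^(n+1) := by
        intro i hi
        have hi' : i ≤ n+1 := Nat.lt_succ_iff.mp (Finset.mem_range.mp hi)
        rw [norm_mul, norm_pow, norm_pow]
        calc ‖z1‖^i * ‖z2‖^(n+2-1-i) ≤ s^i * s^(n+2-1-i) := by
              refine mul_le_mul (pow_le_pow_left₀ (norm_nonneg _) ?_ _)
                (pow_le_pow_left₀ (norm_nonneg _) ?_ _) (by positivity) (by positivity)
              · exact h1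
              · exact h2
          _ = s^(n+1) := by rw [← pow_add]; congr 1; omega
      calc ∑ i ∈ Finset.range (n+2), ‖z1^i * z2^(n+2-1-i)‖
          ≤ ∑ _i ∈ Finset.range (n+2), s^(n+1) := Finset.sum_le_sum hterm
        _ = ((n:ℝ)+2) * s^(n+1) := by
            rw [Finset.sum_const, Finset.card_range, nsmul_eq_mul]; push_cast; ring
    exact mul_le_mul_of_nonneg_right hb (norm_nonneg _)
  have hinj : Set.InjOn f unitDisk := by
    intro z1 h1 z2 h2 hfe
    by_contra hne
    set s : ℝ := max ‖z1‖ ‖z2‖ with hsdef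
    have hs1 : s < 1 := max_lt (habs z1 h1) (habs z2 h2)
    have hs0 : 0 ≤ s := le_trans (norm_nonneg _) (le_max_left _ _)
    have hd0 : 0 < ‖z1 - z2‖ := by rw [norm_pos_iff]; exact sub_ne_zero.2 hne
    have hsub : HasSum (fun n : ℕ => a (n+2) * z1^(n+2) - a (n+2) * z2^(n+2)) (z2 - z1) := by
      have h := (hrep z1 h1).sub (hrep z2 h2)
      rw [hfe] at h
      rw [show z2 - z1 = f z2 - z1 - (f z2 - z2) by ring]
      exact h
    have hterm : ∀ n : ℕ, ‖a (n+2) * z1^(n+2) - a (n+2) * z2^(n+2)‖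
        ≤ (((n:ℝ)+2) * A n) * (s * ‖z1 - z2‖) := by
      intro n
      have he : a (n+2) * z1^(n+2) - a (n+2) * z2^(n+2) = a (n+2) * (z1^(n+2) - z2^(n+2)) := by
        ring
      rw [he, norm_mul]
      have hp := hpowdiff n z1 z2 s (le_max_left _ _) (le_max_right _ _)
      have hsp : s^(n+1) ≤ s := by
        calc s^(n+1) ≤ s^1 := pow_le_pow_of_le_one hs0 hs1.le (by omega)
          _ = s := pow_one s
      have h3 : ‖a (n+2)‖ = A n := rfl
      rw [h3]
      calc A n * ‖z1^(n+2) - z2^(n+2)‖ ≤ A n * (((n:ℝ)+2) * s^(n+1) * ‖z1 - z2‖) :=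
            mul_le_mul_of_nonneg_left hp (hA0 n)
        _ ≤ (((n:ℝ)+2) * A n) * (s * ‖z1 - z2‖) := by
            nlinarith [mul_nonneg (mul_nonneg (by positivity : (0:ℝ) ≤ ((n:ℝ)+2) * A n) hd0.le)
              (sub_nonneg.2 hsp)]
    have hsumnorm : Summable (fun n : ℕ => ‖a (n+2) * z1^(n+2) - a (n+2) * z2^(n+2)‖) :=
      Summable.of_nonneg_of_le (fun n => norm_nonneg _) hterm (hNsum.mul_right _)
    have hchain : ‖z2 - z1‖ ≤ s * ‖z1 - z2‖ := by
      calc ‖z2 - z1‖ = ‖∑' n : ℕ, (a (n+2) * z1^(n+2) - a (n+2) * z2^(n+2))‖ := by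
            rw [hsub.tsum_eq]
        _ ≤ ∑' n : ℕ, ‖a (n+2) * z1^(n+2) - a (n+2) * z2^(n+2)‖ :=
            norm_tsum_le_tsum_norm hsumnorm
        _ ≤ ∑' n : ℕ, (((n:ℝ)+2) * A n) * (s * ‖z1 - z2‖) :=
            Summable.tsum_le_tsum hterm hsumnorm (hNsum.mul_right _)
        _ = (∑' n : ℕ, ((n:ℝ)+2) * A n) * (s * ‖z1 - z2‖) := tsum_mul_right
        _ ≤ 1 * (s * ‖z1 - z2‖) := by
            refine mul_le_mul_of_nonneg_right hN1 (by positivity)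
        _ = s * ‖z1 - z2‖ := one_mul _
    rw [norm_sub_rev] at hchain
    nlinarith [hchain, hd0, hs1]
  refine ⟨⟨hf, hf0, hdf0⟩, hinj, ?_⟩
  intro z hz hz0
  set r : ℝ := ‖z‖ with hrdef
  have hr1 : r < 1 := habs z hz
  have hr0 : 0 < r := norm_pos_iff.2 hz0
  have hT := hrep z hz
  have hdsum : Summable (fun n : ℕ => ((n:ℂ)+2) * a (n+2) * z^(n+1)) :=
    Summable.of_norm_bounded hNsum (fun n => hbound n z hz)
  have hD : HasSum (fun n : ℕ => ((n:ℂ)+2) * a (n+2) * z^(n+1)) (D z) := hdsum.hasSum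
  have hdfz : deriv f z = 1 + D z := hdf z hz
  have hzD : HasSum (fun n : ℕ => ((n:ℂ)+2) * a (n+2) * z^(n+2)) (z * D z) := by
    have h := hD.mul_left z
    have he : (fun n : ℕ => z * (((n:ℂ)+2) * a (n+2) * z^(n+1)))
        = fun n : ℕ => ((n:ℂ)+2) * a (n+2) * z^(n+2) := by funext n; ring
    rwa [he] at h
  set G : ℂ := (1 - (ρ:ℂ)) * f z + (ρ:ℂ) * z * deriv f z with hGdef
  have hg : HasSum (fun n : ℕ => (1 + ((n:ℂ)+2) * (ρ:ℂ) - (ρ:ℂ)) * a (n+2) * z^(n+2))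
      (G - z) := by
    have h := (hT.mul_left (1 - (ρ:ℂ))).add (hzD.mul_left (ρ:ℂ))
    have he : (fun n : ℕ => (1-(ρ:ℂ)) * (a (n+2) * z^(n+2)) +
          (ρ:ℂ) * (((n:ℂ)+2) * a (n+2) * z^(n+2)))
        = fun n : ℕ => (1 + ((n:ℂ)+2) * (ρ:ℂ) - (ρ:ℂ)) * a (n+2) * z^(n+2) := by
      funext n; ring
    rw [he] at h
    rw [show G - z = (1 - (ρ:ℂ)) * (f z - z) + (ρ:ℂ) * (z * D z) by rw [hGdef, hdfz]; ring]
    exact h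
  have hnum : HasSum (fun n : ℕ => (1-(ρ:ℂ)) * ((n:ℂ)+1) * a (n+2) * z^(n+2))
      (z * deriv f z - G) := by
    have h := hzD.sub hg
    have he : (fun n : ℕ => ((n:ℂ)+2) * a (n+2) * z^(n+2) -
          (1 + ((n:ℂ)+2) * (ρ:ℂ) - (ρ:ℂ)) * a (n+2) * z^(n+2))
        = fun n : ℕ => (1-(ρ:ℂ)) * ((n:ℂ)+1) * a (n+2) * z^(n+2) := by funext n; ring
    rw [he] at h
    rw [show z * deriv f z - G = z * D z - (G - z) by rw [hdfz]; ring]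
    exact h
  have hcoefQ : ∀ n : ℕ, (0:ℝ) ≤ 1 + ((n:ℝ)+2) * ρ - ρ := by
    intro n; nlinarith [Nat.cast_nonneg (α := ℝ) n]
  have hnormg : ∀ n : ℕ, ‖(1 + ((n:ℂ)+2) * (ρ:ℂ) - (ρ:ℂ)) * a (n+2) * z^(n+2)‖
      = (1 + ((n:ℝ)+2) * ρ - ρ) * A n * r^(n+2) := by
    intro n
    have e1 : (1 + ((n:ℂ)+2) * (ρ:ℂ) - (ρ:ℂ)) = (((1 + ((n:ℝ)+2) * ρ - ρ) : ℝ) : ℂ) := by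
      push_cast; ring
    rw [e1, norm_mul, norm_mul, norm_pow, Complex.norm_real, Real.norm_eq_abs,
      _root_.abs_of_nonneg (hcoefQ n)]
  have hnormnum : ∀ n : ℕ, ‖(1-(ρ:ℂ)) * ((n:ℂ)+1) * a (n+2) * z^(n+2)‖
      = (1-ρ) * ((n:ℝ)+1) * A n * r^(n+2) := by
    intro n
    have e1 : (1-(ρ:ℂ)) * ((n:ℂ)+1) = ((((1-ρ) * ((n:ℝ)+1)) : ℝ) : ℂ) := by push_cast; ring
    rw [mul_assoc ((1:ℂ)-(ρ:ℂ)), ← mul_assoc, e1, norm_mul, norm_mul, norm_pow,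
      Complex.norm_real, Real.norm_eq_abs,
      _root_.abs_of_nonneg (by nlinarith [Nat.cast_nonneg (α := ℝ) n] : (0:ℝ) ≤ (1-ρ) * ((n:ℝ)+1))]
  set Q : ℝ := ∑' n : ℕ, (1 + ((n:ℝ)+2) * ρ - ρ) * A n * r^(n+2) with hQdef
  set P : ℝ := ∑' n : ℕ, (1-ρ) * ((n:ℝ)+1) * A n * r^(n+2) with hPdef
  have hrp2 : ∀ n : ℕ, r^(n+2) ≤ 1 := fun n => pow_le_one₀ hr0.le hr1.le
  have hQb : ∀ n : ℕ, (1 + ((n:ℝ)+2) * ρ - ρ) * A n * r^(n+2) ≤ ((n:ℝ)+2) * A n := by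
    intro n
    have h1 : (1 + ((n:ℝ)+2) * ρ - ρ) ≤ ((n:ℝ)+2) := by
      nlinarith [Nat.cast_nonneg (α := ℝ) n]
    calc (1 + ((n:ℝ)+2) * ρ - ρ) * A n * r^(n+2) ≤ (1 + ((n:ℝ)+2) * ρ - ρ) * A n * 1 :=
          mul_le_mul_of_nonneg_left (hrp2 n) (mul_nonneg (hcoefQ n) (hA0 n))
      _ = (1 + ((n:ℝ)+2) * ρ - ρ) * A n := mul_one _
      _ ≤ ((n:ℝ)+2) * A n := mul_le_mul_of_nonneg_right h1 (hA0 n)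
  have hPb : ∀ n : ℕ, (1-ρ) * ((n:ℝ)+1) * A n * r^(n+2) ≤ ((n:ℝ)+2) * A n := by
    intro n
    have hco : (0:ℝ) ≤ (1-ρ) * ((n:ℝ)+1) := by nlinarith [Nat.cast_nonneg (α := ℝ) n]
    have h1 : (1-ρ) * ((n:ℝ)+1) ≤ ((n:ℝ)+2) := by nlinarith [Nat.cast_nonneg (α := ℝ) n]
    calc (1-ρ) * ((n:ℝ)+1) * A n * r^(n+2) ≤ (1-ρ) * ((n:ℝ)+1) * A n * 1 :=
          mul_le_mul_of_nonneg_left (hrp2 n) (mul_nonneg hco (hA0 n))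
      _ = (1-ρ) * ((n:ℝ)+1) * A n := mul_one _
      _ ≤ ((n:ℝ)+2) * A n := mul_le_mul_of_nonneg_right h1 (hA0 n)
  have hQsum : Summable (fun n : ℕ => (1 + ((n:ℝ)+2) * ρ - ρ) * A n * r^(n+2)) :=
    Summable.of_nonneg_of_le
      (fun n => mul_nonneg (mul_nonneg (hcoefQ n) (hA0 n)) (by positivity)) hQb hNsum
  have hPsum : Summable (fun n : ℕ => (1-ρ) * ((n:ℝ)+1) * A n * r^(n+2)) :=
    Summable.of_nonneg_of_le
      (fun n => mul_nonneg (mul_nonneg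
        (by nlinarith [Nat.cast_nonneg (α := ℝ) n] : (0:ℝ) ≤ (1-ρ) * ((n:ℝ)+1)) (hA0 n))
        (by positivity)) hPb hNsum
  have hP0 : 0 ≤ P := tsum_nonneg (fun n => mul_nonneg (mul_nonneg
    (by nlinarith [Nat.cast_nonneg (α := ℝ) n] : (0:ℝ) ≤ (1-ρ) * ((n:ℝ)+1)) (hA0 n))
    (by positivity))
  have hQ0 : 0 ≤ Q := tsum_nonneg (fun n => mul_nonneg (mul_nonneg (hcoefQ n) (hA0 n))
    (by positivity))
  have hsum2 : Summable (fun n : ℕ =>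
      (1-γ) * Real.cos ξ * ((1 + ((n:ℝ)+2) * ρ - ρ) * A n * r^(n+2))) := hQsum.mul_left _
  have hmaster : P + (1-γ) * Real.cos ξ * Q < r * ((1-γ) * Real.cos ξ) := by
    have hcomb : P + (1-γ) * Real.cos ξ * Q = ∑' n : ℕ,
        ((1-ρ) * ((n:ℝ)+1) * A n * r^(n+2) +
          (1-γ) * Real.cos ξ * ((1 + ((n:ℝ)+2) * ρ - ρ) * A n * r^(n+2))) := by
      rw [Summable.tsum_add hPsum hsum2, hPdef, hQdef, tsum_mul_left]
    rw [hcomb]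
    have hterm : ∀ n : ℕ, (1-ρ) * ((n:ℝ)+1) * A n * r^(n+2) +
        (1-γ) * Real.cos ξ * ((1 + ((n:ℝ)+2) * ρ - ρ) * A n * r^(n+2))
        ≤ (r^2 * Real.cos ξ) * (c n * A n) := by
      intro n
      have hr2 : r^(n+2) ≤ r^2 := by
        calc r^(n+2) = r^n * r^2 := by ring
          _ ≤ 1 * r^2 := by
              refine mul_le_mul_of_nonneg_right (pow_le_one₀ hr0.le hr1.le) (by positivity)
          _ = r^2 := one_mul _
      have hid : (1-ρ) * ((n:ℝ)+1) + (1-γ) * Real.cos ξ * (1 + ((n:ℝ)+2) * ρ - ρ)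
          = Real.cos ξ * c n := by
        simp only [hcdef]
        field_simp
      have h1 : (1-ρ) * ((n:ℝ)+1) * A n * r^(n+2) +
          (1-γ) * Real.cos ξ * ((1 + ((n:ℝ)+2) * ρ - ρ) * A n * r^(n+2))
          = (Real.cos ξ * c n) * (A n * r^(n+2)) := by rw [← hid]; ring
      rw [h1]
      calc (Real.cos ξ * c n) * (A n * r^(n+2)) ≤ (Real.cos ξ * c n) * (A n * r^2) := by
            refine mul_le_mul_of_nonneg_left ?_ (mul_nonneg hcos.le (hc0 n))
            exact mul_le_mul_of_nonneg_left hr2 (hA0 n)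
        _ = (r^2 * Real.cos ξ) * (c n * A n) := by ring
    refine lt_of_le_of_lt
      (Summable.tsum_le_tsum hterm (hPsum.add hsum2) (hcsum.mul_left _)) ?_
    rw [tsum_mul_left]
    have h4 : r^2 * Real.cos ξ * ∑' n, c n * A n ≤ r^2 * Real.cos ξ * (1-γ) :=
      mul_le_mul_of_nonneg_left hcle (by positivity)
    have h5 : r^2 * Real.cos ξ * (1-γ) < r * ((1-γ) * Real.cos ξ) := by
      nlinarith [mul_pos hγ' hcos, mul_pos hr0 (mul_pos hγ' hcos)]
    linarith
  have hQr : Q < r := by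
    have h1 : ((1-γ) * Real.cos ξ) * Q < ((1-γ) * Real.cos ξ) * r := by nlinarith [hP0]
    exact lt_of_mul_lt_mul_left h1 (mul_nonneg hγ'.le hcos.le)
  have hGz : ‖G - z‖ ≤ Q := by
    rw [← hg.tsum_eq]
    refine le_trans (norm_tsum_le_tsum_norm (hQsum.congr (fun n => (hnormg n).symm))) ?_
    rw [hQdef]
    exact le_of_eq (tsum_congr hnormg)
  have hGlow : r - Q ≤ ‖G‖ := by
    have h1 : ‖z‖ - ‖G‖ ≤ ‖G - z‖ := by rw [norm_sub_rev]; exact norm_sub_norm_le z G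
    linarith [hrdef]
  have hGpos : 0 < ‖G‖ := lt_of_lt_of_le (by linarith) hGlow
  have hGne : G ≠ 0 := by
    intro h
    rw [h] at hGpos
    simp at hGpos
  have hNle' : ‖z * deriv f z - G‖ ≤ P := by
    rw [← hnum.tsum_eq]
    refine le_trans (norm_tsum_le_tsum_norm (hPsum.congr (fun n => (hnormnum n).symm))) ?_
    rw [hPdef]
    exact le_of_eq (tsum_congr hnormnum)
  have hNlt : ‖z * deriv f z - G‖ < (1-γ) * Real.cos ξ * ‖G‖ := by
    have h2 : (1-γ) * Real.cos ξ * (r - Q) ≤ (1-γ) * Real.cos ξ * ‖G‖ :=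
      mul_le_mul_of_nonneg_left hGlow (by positivity)
    nlinarith [hNle', hmaster]
  refine ⟨hGne, ?_⟩
  have hsplit : Complex.exp (Complex.I * ξ) * (z * deriv f z) / G
      = Complex.exp (Complex.I * ξ) + Complex.exp (Complex.I * ξ) * (z * deriv f z - G) / G := by
    field_simp
    ring
  rw [hsplit, Complex.add_re]
  have hre1 : (Complex.exp (Complex.I * ξ)).re = Real.cos ξ := by
    rw [mul_comm]; exact Complex.exp_ofReal_mul_I_re ξ
  rw [hre1]
  have habs2 : ‖Complex.exp (Complex.I * ξ) * (z * deriv f z - G) / G‖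
      = ‖z * deriv f z - G‖ / ‖G‖ := by
    rw [norm_div, norm_mul]
    simp [Complex.norm_exp]
  have h4 : ‖Complex.exp (Complex.I * ξ) * (z * deriv f z - G) / G‖
      < (1-γ) * Real.cos ξ := by
    rw [habs2, div_lt_iff₀ hGpos]
    exact hNlt
  have h3 := (abs_le.1 (Complex.abs_re_le_norm
    (Complex.exp (Complex.I * ξ) * (z * deriv f z - G) / G))).1
  nlinarith [h3, h4, hcos]
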